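/- Let η be a Toeplitz array with period structure (Γ_n) satisfying J(n) ⊆ Per(η,Γ_{n+1}) \ Per(η,Γ_n) for all n. Then d_{n+1} = d_n + (|D_n|/|D_{n+1}|)(1 - d_n) for every n, where d_n = |D_n ∩ Per(η,Γ_n)|/|D_n|; in particular (d_n) is nondecreasing. -/

import Mathlib

open Pointwise

/-- `Per(η, Γ, α)`: positions `g` such that `η` equals `α` on the whole coset `Γ g`. -/
def PerA {G A : Type*} [Group G] (η : G → A) (Γ : Subgroup G) (α : A) : Set G :=
  {g | ∀ γ ∈ Γ, η (γ * g) = α}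

/-- `Per(η, Γ) = ⋃_α Per(η, Γ, α)`: positions at which `η` is `Γ`-periodic. -/
def Per {G A : Type*} [Group G] (η : G → A) (Γ : Subgroup G) : Set G :=
  ⋃ α, PerA η Γ α

/-- `Γ` is an essential group of periods of `η`: whenever
`Per(η,Γ,α) ⊆ Per(σ^g η, Γ, α)` for all symbols `α`, we must have `g ∈ Γ`. -/
def IsEssential {G A : Type*} [Group G] (η : G → A) (Γ : Subgroup G) : Prop :=
  ∀ g : G, (∀ α, PerA η Γ α ⊆ PerA (fun h => η (g⁻¹ * h)) Γ α) → g ∈ Γ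

lemma count_tiling {G : Type*} [Group G] (Γ : Subgroup G) (hN : Γ.Normal)
    (Dn Dm : Finset G)
    (hfund : ∀ g : G, ∃! d, d ∈ Dn ∧ g⁻¹ * d ∈ Γ)
    (hcompat : (Dm : Set G) = ⋃ v ∈ (Dm : Set G) ∩ (Γ : Set G), v • (Dn : Set G))
    (S : Set G) (hS : ∀ v ∈ Γ, ∀ x ∈ S, v * x ∈ S) :
    ((Dm : Set G) ∩ S).ncard = ((Dm : Set G) ∩ (Γ : Set G)).ncard * ((Dn : Set G) ∩ S).ncard := by
  classical
  have hS' : ∀ v ∈ Γ, ∀ x : G, v * x ∈ S ↔ x ∈ S := by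
    intro v hv x
    constructor
    · intro h
      have := hS v⁻¹ (inv_mem hv) _ h
      simpa using this
    · exact hS v hv x
  have e1 : ((Dm : Set G) ∩ S) = ↑(Dm.filter (· ∈ S)) := by ext x; simp
  have e2 : ((Dm : Set G) ∩ (Γ : Set G)) = ↑(Dm.filter (fun x => x ∈ Γ)) := by ext x; simp
  have e3 : ((Dn : Set G) ∩ S) = ↑(Dn.filter (· ∈ S)) := by ext x; simp
  rw [e1, e2, e3, Set.ncard_coe_finset, Set.ncard_coe_finset, Set.ncard_coe_finset]
  have hdecomp : ∀ x ∈ Dm, ∃ v d, v ∈ Dm ∧ v ∈ Γ ∧ d ∈ Dn ∧ x = v * d := by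
    intro x hx
    have hx' : (x : G) ∈ (Dm : Set G) := hx
    rw [hcompat] at hx'
    simp only [Set.mem_iUnion, Set.mem_inter_iff, SetLike.mem_coe, exists_prop] at hx'
    obtain ⟨v, ⟨hv1, hv2⟩, hxv⟩ := hx'
    rw [Set.mem_smul_set_iff_inv_smul_mem] at hxv
    exact ⟨v, v⁻¹ * x, hv1, hv2, hxv, by group⟩
  have hmemDm : ∀ v, v ∈ Dm → v ∈ Γ → ∀ d ∈ Dn, v * d ∈ Dm := by
    intro v hv1 hv2 d hd
    have : v * d ∈ (Dm : Set G) := by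
      rw [hcompat]
      simp only [Set.mem_iUnion, Set.mem_inter_iff, SetLike.mem_coe, exists_prop]
      exact ⟨v, ⟨hv1, hv2⟩, Set.mem_smul_set.mpr ⟨d, hd, rfl⟩⟩
    exact this
  have key : Dm.filter (· ∈ S)
      = (Dm.filter (fun x => x ∈ Γ)).biUnion
          (fun v => (Dn.filter (· ∈ S)).image (fun d => v * d)) := by
    ext x
    simp only [Finset.mem_filter, Finset.mem_biUnion, Finset.mem_image]
    constructor
    · rintro ⟨hxD, hxS⟩
      obtain ⟨v, dd, hvD, hvΓ, hdD, rfl⟩ := hdecomp x hxD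
      exact ⟨v, ⟨hvD, hvΓ⟩, dd, ⟨hdD, (hS' v hvΓ dd).mp hxS⟩, rfl⟩
    · rintro ⟨v, ⟨hvD, hvΓ⟩, dd, ⟨hdD, hdS⟩, rfl⟩
      exact ⟨hmemDm v hvD hvΓ dd hdD, hS v hvΓ dd hdS⟩
  rw [key, Finset.card_biUnion]
  · simp only [Finset.card_image_of_injective _ (mul_right_injective _), Finset.sum_const,
      smul_eq_mul]
  · intro v hv v' hv' hne
    simp only [Finset.mem_coe, Finset.mem_filter] at hv hv'
    rw [Function.onFun, Finset.disjoint_left]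
    rintro x hx hx'
    simp only [Finset.mem_image, Finset.mem_filter] at hx hx'
    obtain ⟨dd, ⟨hdD, _⟩, hxd⟩ := hx
    obtain ⟨dd', ⟨hdD', _⟩, hxd'⟩ := hx'
    obtain ⟨w, _, huniq⟩ := hfund x
    have m1 : dd ∈ Dn ∧ x⁻¹ * dd ∈ Γ := by
      refine ⟨hdD, ?_⟩
      have hc := hN.conj_mem v⁻¹ (inv_mem hv.2) dd⁻¹
      have he : x⁻¹ * dd = dd⁻¹ * v⁻¹ * dd⁻¹⁻¹ := by rw [← hxd]; group
      rw [he]; exact hc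
    have m2 : dd' ∈ Dn ∧ x⁻¹ * dd' ∈ Γ := by
      refine ⟨hdD', ?_⟩
      have hc := hN.conj_mem v'⁻¹ (inv_mem hv'.2) dd'⁻¹
      have he : x⁻¹ * dd' = dd'⁻¹ * v'⁻¹ * dd'⁻¹⁻¹ := by rw [← hxd']; group
      rw [he]; exact hc
    have hdd : dd = dd' := (huniq _ m1).trans (huniq _ m2).symm
    apply hne
    subst hdd
    rw [← hxd'] at hxd
    exact mul_right_cancel hxd

/-- If `J n ⊆ Per(η,Γ (n+1)) \\ Per(η,Γ n)` for all `n`, then `d (n+1) = d n + (|D n|/|D (n+1)|)(1 - d n)`, and `(d n)` is nondecreasing. -/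
theorem density_recursion {G A : Type*} [Group G] [Fintype A] (hA : 2 ≤ Fintype.card A)
    (Γ : ℕ → Subgroup G)
    (hnorm : ∀ n, (Γ n).Normal)
    (hfin : ∀ n, (Γ n).FiniteIndex)
    (hdec : ∀ n, Γ (n + 1) ≤ Γ n)
    (D : ℕ → Finset G)
    (hD0 : D 0 = {1})
    (hDone : ∀ n, (1 : G) ∈ D n)
    (hDmono : ∀ n, D n ⊆ D (n + 1))
    (hfund : ∀ n, ∀ g : G, ∃! d, d ∈ D n ∧ g⁻¹ * d ∈ Γ n)
    (hcompat : ∀ i j, i < j →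
      (D j : Set G) = ⋃ v ∈ (D j : Set G) ∩ (Γ i : Set G), v • (D i : Set G))
    (J : ℕ → Set G)
    (hJ : ∀ n, J n = (D n : Set G) \ ⋃ i ∈ Finset.range n, J i * (Γ (i + 1) : Set G))
    (η : G → A)
    (hToe : ∀ g : G, ∃ n, g ∈ Per η (Γ n))
    (hess : ∀ n, IsEssential η (Γ n))
    (hJper : ∀ n : ℕ, J n ⊆ Per η (Γ (n + 1)) \ Per η (Γ n))
    (d : ℕ → ℝ)
    (hd : ∀ n, d n = (Nat.card ((D n : Set G) ∩ Per η (Γ n) : Set G) : ℝ) / ((D n).card : ℝ))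
    :
    (∀ n : ℕ, d (n + 1) = d n + ((D n).card : ℝ) / ((D (n + 1)).card : ℝ) * (1 - d n)) ∧
      Monotone d := by
  classical
  -- the chain of subgroups is decreasing
  have hchain : ∀ i j, i ≤ j → Γ j ≤ Γ i := by
    intro i j hij
    induction hij with
    | refl => exact le_rfl
    | step _ ih => exact le_trans (hdec _) ih
  -- Per is monotone in n
  have hPer_mono : ∀ i j, i ≤ j → Per η (Γ i) ⊆ Per η (Γ j) := by
    intro i j hij x hx
    obtain ⟨α, hα⟩ := Set.mem_iUnion.mp hx
    exact Set.mem_iUnion.mpr ⟨α, fun γ hγ => hα γ (hchain i j hij hγ)⟩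
  -- Per is invariant under right multiplication by the subgroup
  have hPer_rmul : ∀ n, ∀ g ∈ Per η (Γ n), ∀ γ ∈ Γ n, g * γ ∈ Per η (Γ n) := by
    intro n g hg γ hγ
    obtain ⟨α, hα⟩ := Set.mem_iUnion.mp hg
    refine Set.mem_iUnion.mpr ⟨α, fun δ hδ => ?_⟩
    have h1 : δ * (g * γ * g⁻¹) ∈ Γ n := mul_mem hδ ((hnorm n).conj_mem γ hγ g)
    have he : δ * (g * γ) = (δ * (g * γ * g⁻¹)) * g := by group
    rw [he]
    exact hα _ h1
  -- abbreviation for the union sets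
  set S : ℕ → Set G := fun n => ⋃ i ∈ Finset.range n, J i * (Γ (i + 1) : Set G) with hSdef
  have hJS : ∀ n, J n = (D n : Set G) \ S n := hJ
  have hJD : ∀ i, J i ⊆ (D i : Set G) := by
    intro i
    rw [hJS i]; exact Set.diff_subset
  have hmemS : ∀ n x, x ∈ S n ↔ ∃ i < n, x ∈ J i * (Γ (i + 1) : Set G) := by
    intro n x
    simp [hSdef, Set.mem_iUnion]
  -- S n ⊆ Per n
  have hSPer : ∀ n, S n ⊆ Per η (Γ n) := by
    intro n x hx
    obtain ⟨i, hi, hx⟩ := (hmemS n x).mp hx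
    rw [Set.mem_mul] at hx
    obtain ⟨j, hj, γ, hγ, rfl⟩ := hx
    have hjPer : j ∈ Per η (Γ (i + 1)) := ((hJper i) hj).1
    exact hPer_mono (i + 1) n hi (hPer_rmul (i + 1) j hjPer γ hγ)
  -- left invariance of S n under Γ n
  have hSlinv : ∀ n, ∀ v ∈ Γ n, ∀ x ∈ S n, v * x ∈ S n := by
    intro n v hv x hx
    obtain ⟨i, hi, hx⟩ := (hmemS n x).mp hx
    rw [Set.mem_mul] at hx
    obtain ⟨j, hj, γ, hγ, rfl⟩ := hx
    refine (hmemS n _).mpr ⟨i, hi, ?_⟩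
    have hv1 : v ∈ Γ (i + 1) := hchain (i + 1) n hi hv
    have hv2 : j⁻¹ * v * j⁻¹⁻¹ ∈ Γ (i + 1) := (hnorm (i + 1)).conj_mem v hv1 j⁻¹
    rw [Set.mem_mul]
    exact ⟨j, hj, (j⁻¹ * v * j⁻¹⁻¹) * γ, mul_mem hv2 hγ, by group⟩
  -- right invariance of S n under Γ n
  have hSrinv : ∀ n, ∀ γ ∈ Γ n, ∀ x ∈ S n, x * γ ∈ S n := by
    intro n γ hγ x hx
    obtain ⟨i, hi, hx⟩ := (hmemS n x).mp hx
    rw [Set.mem_mul] at hx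
    obtain ⟨j, hj, δ, hδ, rfl⟩ := hx
    refine (hmemS n _).mpr ⟨i, hi, ?_⟩
    rw [Set.mem_mul]
    exact ⟨j, hj, δ * γ, mul_mem hδ (hchain (i + 1) n hi hγ), by group⟩
  -- On D m, being in Per m is the same as being in S m
  have hA' : ∀ m, (D m : Set G) ∩ Per η (Γ m) = (D m : Set G) ∩ S m := by
    intro m
    ext x
    simp only [Set.mem_inter_iff]
    refine and_congr_right fun hx => ⟨fun hxPer => ?_, fun h => hSPer m h⟩
    by_contra hxS
    have hxJ : x ∈ J m := by rw [hJS m]; exact ⟨hx, hxS⟩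
    exact ((hJper m) hxJ).2 hxPer
  -- J n is exactly D n minus Per n
  have hJeq : ∀ n, J n = (D n : Set G) \ Per η (Γ n) := by
    intro n
    rw [hJS n]
    ext x
    simp only [Set.mem_diff]
    refine and_congr_right fun hx => ?_
    constructor
    · intro hxS hxPer
      have hxJ : x ∈ J n := by rw [hJS n]; exact ⟨hx, hxS⟩
      exact ((hJper n) hxJ).2 hxPer
    · intro hxPer hxS
      exact hxPer (hSPer n hxS)
  -- the key identity: D (n+1) ∩ (J n * Γ (n+1)) = J n
  have hC : ∀ n, (D (n + 1) : Set G) ∩ (J n * (Γ (n + 1) : Set G)) = J n := by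
    intro n
    ext x
    simp only [Set.mem_inter_iff]
    constructor
    · rintro ⟨hxD, hxJΓ⟩
      rw [Set.mem_mul] at hxJΓ
      obtain ⟨j, hj, γ, hγ, rfl⟩ := hxJΓ
      have hjD : j ∈ D (n + 1) := hDmono n (hJD n hj)
      obtain ⟨w, _, huniq⟩ := hfund (n + 1) (j * γ)
      have m1 : j ∈ D (n + 1) ∧ (j * γ)⁻¹ * j ∈ Γ (n + 1) := by
        refine ⟨hjD, ?_⟩
        have he : (j * γ)⁻¹ * j = γ⁻¹ := by group
        rw [he]
        exact inv_mem hγ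
      have m2 : j * γ ∈ D (n + 1) ∧ (j * γ)⁻¹ * (j * γ) ∈ Γ (n + 1) := by
        refine ⟨hxD, ?_⟩
        have he : (j * γ)⁻¹ * (j * γ) = 1 := by group
        rw [he]
        exact one_mem _
      have : j * γ = j := (huniq _ m2).trans (huniq _ m1).symm
      rw [this]
      exact hj
    · intro hxJ
      refine ⟨hDmono n (hJD n hxJ), ?_⟩
      rw [Set.mem_mul]
      exact ⟨x, hxJ, 1, one_mem _, mul_one x⟩
  -- S (n+1) splits
  have hSsucc : ∀ n, S (n + 1) = S n ∪ J n * (Γ (n + 1) : Set G) := by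
    intro n
    ext x
    rw [hmemS (n + 1) x]
    simp only [Set.mem_union, hmemS n x]
    constructor
    · rintro ⟨i, hi, hx⟩
      rcases Nat.lt_succ_iff_lt_or_eq.mp hi with h | rfl
      · exact Or.inl ⟨i, h, hx⟩
      · exact Or.inr hx
    · rintro (⟨i, hi, hx⟩ | hx)
      · exact ⟨i, Nat.lt_succ_of_lt hi, hx⟩
      · exact ⟨n, Nat.lt_succ_self n, hx⟩
  -- J n * Γ (n+1) is disjoint from S n
  have hdisj : ∀ n, Disjoint (S n) (J n * (Γ (n + 1) : Set G)) := by
    intro n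
    rw [Set.disjoint_right]
    rintro x hx hxS
    rw [Set.mem_mul] at hx
    obtain ⟨j, hj, γ, hγ, rfl⟩ := hx
    have : j * γ * γ⁻¹ ∈ S n :=
      hSrinv n γ⁻¹ (inv_mem (hchain n (n + 1) (Nat.le_succ n) hγ)) _ hxS
    simp only [mul_inv_cancel_right] at this
    have hjJ : j ∉ S n := by
      have := hJS n ▸ hj
      exact this.2
    exact hjJ this
  -- cardinalities
  set p : ℕ → ℕ := fun n => ((D n : Set G) ∩ Per η (Γ n)).ncard with hpdef
  set c : ℕ → ℕ := fun n => ((D (n + 1) : Set G) ∩ (Γ n : Set G)).ncard with hcdef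
  have hfinDcap : ∀ (n : ℕ) (T : Set G), ((D n : Set G) ∩ T).Finite :=
    fun n T => Set.Finite.inter_of_left (D n).finite_toSet T
  -- total cardinality
  have hcardD : ∀ n, (D (n + 1)).card = c n * (D n).card := by
    intro n
    have := count_tiling (Γ n) (hnorm n) (D n) (D (n + 1)) (hfund n)
      (hcompat n (n + 1) (Nat.lt_succ_self n)) Set.univ (by intro v _ x _; trivial)
    simpa [Set.inter_univ, Set.ncard_coe_finset] using this
  -- tiling count for S n
  have hcardS : ∀ n, ((D (n + 1) : Set G) ∩ S n).ncard = c n * ((D n : Set G) ∩ S n).ncard := by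
    intro n
    exact count_tiling (Γ n) (hnorm n) (D n) (D (n + 1)) (hfund n)
      (hcompat n (n + 1) (Nat.lt_succ_self n)) (S n) (hSlinv n)
  -- the recursion on p
  have hqJ : ∀ n, ((D n : Set G) \ Per η (Γ n)).ncard = (J n).ncard := by
    intro n; rw [hJeq n]
  have hpq : ∀ n, p n + (J n).ncard = (D n).card := by
    intro n
    rw [← hqJ n, hpdef]
    have hsplit : (D n : Set G) = ((D n : Set G) ∩ Per η (Γ n)) ∪ ((D n : Set G) \ Per η (Γ n)) := by
      rw [Set.inter_union_diff]
    have hdisj' : Disjoint ((D n : Set G) ∩ Per η (Γ n)) ((D n : Set G) \ Per η (Γ n)) :=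
      Set.disjoint_of_subset_left Set.inter_subset_right Set.disjoint_sdiff_right
    calc ((D n : Set G) ∩ Per η (Γ n)).ncard + ((D n : Set G) \ Per η (Γ n)).ncard
        = (((D n : Set G) ∩ Per η (Γ n)) ∪ ((D n : Set G) \ Per η (Γ n))).ncard :=
          (Set.ncard_union_eq hdisj' (hfinDcap n _) ((D n).finite_toSet.diff)).symm
      _ = (D n).card := by rw [← hsplit, Set.ncard_coe_finset]
  have hprec : ∀ n, p (n + 1) = c n * p n + (J n).ncard := by
    intro n
    have e1 : p (n + 1) = ((D (n + 1) : Set G) ∩ S (n + 1)).ncard := by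
      simp only [hpdef, hA' (n + 1)]
    have e2 : (D (n + 1) : Set G) ∩ S (n + 1)
        = ((D (n + 1) : Set G) ∩ S n) ∪ ((D (n + 1) : Set G) ∩ (J n * (Γ (n + 1) : Set G))) := by
      rw [hSsucc n, Set.inter_union_distrib_left]
    have e3 : ((D (n + 1) : Set G) ∩ S (n + 1)).ncard
        = ((D (n + 1) : Set G) ∩ S n).ncard + (J n).ncard := by
      rw [e2, Set.ncard_union_eq
        (Set.disjoint_of_subset Set.inter_subset_right Set.inter_subset_right (hdisj n))
        (hfinDcap (n + 1) _) (hfinDcap (n + 1) _), hC n]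
    rw [e1, e3, hcardS n, ← hA' n]
  -- translate to the reals
  have hDpos : ∀ n, 0 < (D n).card := fun n => Finset.card_pos.mpr ⟨1, hDone n⟩
  have hdn : ∀ n, d n = (p n : ℝ) / ((D n).card : ℝ) := by
    intro n
    rw [hd n]
    simp only [hpdef]
    rw [Nat.card_coe_set_eq]
  have hple : ∀ n, p n ≤ (D n).card := by
    intro n
    have := hpq n
    omega
  have hd_le_one : ∀ n, d n ≤ 1 := by
    intro n
    rw [hdn n]
    apply div_le_one_of_le₀
    · exact_mod_cast hple n
    · exact Nat.cast_nonneg _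
  have key : ∀ n : ℕ, d (n + 1) = d n + ((D n).card : ℝ) / ((D (n + 1)).card : ℝ) * (1 - d n) := by
    intro n
    have h1 : ((D (n + 1)).card : ℝ) = (c n : ℝ) * ((D n).card : ℝ) := by
      exact_mod_cast congrArg Nat.cast (hcardD n)
    have h2 : ((p (n + 1) : ℕ) : ℝ) = (c n : ℝ) * (p n : ℝ) + ((J n).ncard : ℝ) := by
      exact_mod_cast congrArg Nat.cast (hprec n)
    have h3 : ((J n).ncard : ℝ) = ((D n).card : ℝ) - (p n : ℝ) := by
      have := hpq n
      have : (p n : ℝ) + ((J n).ncard : ℝ) = ((D n).card : ℝ) := by exact_mod_cast congrArg Nat.cast this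
      linarith
    have hDn : ((D n).card : ℝ) ≠ 0 := Nat.cast_ne_zero.mpr (hDpos n).ne'
    have hDn' : ((D (n + 1)).card : ℝ) ≠ 0 := Nat.cast_ne_zero.mpr (hDpos (n + 1)).ne'
    rw [hdn (n + 1), hdn n, h2, h3, h1]
    have hcn : (c n : ℝ) ≠ 0 := by
      intro h
      rw [h, zero_mul] at h1
      exact hDn' (by rw [h1])
    field_simp
  refine ⟨key, monotone_nat_of_le_succ fun n => ?_⟩
  rw [key n]
  have ht : (0 : ℝ) ≤ ((D n).card : ℝ) / ((D (n + 1)).card : ℝ) := div_nonneg (Nat.cast_nonneg _) (Nat.cast_nonneg _)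
  nlinarith [hd_le_one n, ht]
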